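/- Let Φ be an irreducible reduced root system with positive roots Φ⁺ in a Euclidean space V, and let w be an element of the Weyl group not contained in any proper standard parabolic subgroup (i.e., the smallest standard parabolic containing w is the whole group). Then the roots α ∈ Φ⁺ with w⁻¹α < 0 span V. -/
import Mathlib


open RealInnerProductSpace

/-- A reduced crystallographic root system `Φ` in a real inner product space,
together with a base `Δ` (set of simple roots), so that every root is either a
nonnegative or a nonpositive combination of the simple roots. -/
structure RootSystemBase (V : Type*) [NormedAddCommGroup V] [InnerProductSpace ℝ V] where
  /-- the (finite) set of roots -/
  Φ : Finset V
  /-- the base (set of simple roots) -/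
  Δ : Finset V
  ne_zero : ∀ α ∈ Φ, α ≠ (0 : V)
  base_sub : Δ ⊆ Φ
  /-- `Φ` is stable under the reflection in each root -/
  reflect_mem : ∀ α ∈ Φ, ∀ β ∈ Φ, β - (2 * ⟪β, α⟫ / ⟪α, α⟫) • α ∈ Φ
  /-- crystallographic condition: all Cartan pairings are integers -/
  crystal : ∀ α ∈ Φ, ∀ β ∈ Φ, ∃ n : ℤ, 2 * ⟪β, α⟫ / ⟪α, α⟫ = (n : ℝ)
  /-- reduced: the only multiples of a root which are roots are `±` itself -/
  reduced : ∀ α ∈ Φ, ∀ t : ℝ, t • α ∈ Φ → t = 1 ∨ t = -1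
  base_indep : LinearIndependent ℝ (Subtype.val : {x // x ∈ Δ} → V)
  /-- every root is a nonnegative or nonpositive combination of simple roots -/
  pos_or_neg : ∀ α ∈ Φ,
    (∃ c : V → ℝ, (∀ d, 0 ≤ c d) ∧ α = ∑ d ∈ Δ, c d • d) ∨
    (∃ c : V → ℝ, (∀ d, 0 ≤ c d) ∧ α = -(∑ d ∈ Δ, c d • d))

namespace RootSystemBase

variable {V : Type*} [NormedAddCommGroup V] [InnerProductSpace ℝ V]

/-- `α` is a positive root: a root which is a nonnegative combination of simple roots. -/
def IsPos (R : RootSystemBase V) (α : V) : Prop :=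
  α ∈ R.Φ ∧ ∃ c : V → ℝ, (∀ d, 0 ≤ c d) ∧ α = ∑ d ∈ R.Δ, c d • d

/-- `α` is a negative root: a root which is a nonpositive combination of simple roots. -/
def IsNeg (R : RootSystemBase V) (α : V) : Prop :=
  α ∈ R.Φ ∧ ∃ c : V → ℝ, (∀ d, 0 ≤ c d) ∧ α = -(∑ d ∈ R.Δ, c d • d)

/-- `δ ≺ α` : the simple root `δ` occurs with positive coefficient in `α`. -/
def Prec (R : RootSystemBase V) (δ α : V) : Prop :=
  ∃ c : V → ℝ, (∀ d, 0 ≤ c d) ∧ α = ∑ d ∈ R.Δ, c d • d ∧ 0 < c δ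

end RootSystemBase

namespace RootSystemBase

variable {V : Type*} [NormedAddCommGroup V] [InnerProductSpace ℝ V] (R : RootSystemBase V)

lemma coeff_eq {c c' : V → ℝ} (h : ∑ d ∈ R.Δ, c d • d = ∑ d ∈ R.Δ, c' d • d) :
    ∀ d ∈ R.Δ, c d = c' d := by
  have h0 : ∑ d ∈ R.Δ.attach, (c d.1 - c' d.1) • (d.1 : V) = 0 := by
    rw [Finset.sum_attach R.Δ (fun d => (c d - c' d) • d)]
    simp only [sub_smul, Finset.sum_sub_distrib, h, sub_self]
  intro d hd
  have := linearIndependent_iff'.mp R.base_indep R.Δ.attach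
    (fun i => c i.1 - c' i.1) h0 ⟨d, hd⟩ (Finset.mem_attach _ _)
  have : c d - c' d = 0 := this
  linarith

lemma not_pos_neg {α : V} (h1 : R.IsPos α) (h2 : R.IsNeg α) : False := by
  obtain ⟨hΦ, c, hc, hα⟩ := h1
  obtain ⟨-, c', hc', hα'⟩ := h2
  have hsum : ∑ d ∈ R.Δ, (c d + c' d) • d = ∑ d ∈ R.Δ, (0:ℝ) • d := by
    simp only [add_smul, Finset.sum_add_distrib, zero_smul, Finset.sum_const_zero]
    rw [← hα]
    have : ∑ d ∈ R.Δ, c' d • d = -α := by rw [hα']; simp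
    rw [this]; simp
  have hz := R.coeff_eq hsum
  have : α = 0 := by
    rw [hα]
    apply Finset.sum_eq_zero
    intro d hd
    have h1 := hz d hd
    have : c d = 0 := by have := hc d; have := hc' d; linarith
    simp [this]
  exact R.ne_zero α hΦ this

lemma isPos_base {δ : V} (hδ : δ ∈ R.Δ) : R.IsPos δ := by
  classical
  refine ⟨R.base_sub hδ, fun x => if x = δ then 1 else 0, ?_, ?_⟩
  · intro d; by_cases h : d = δ <;> simp [h]
  · rw [Finset.sum_eq_single δ]
    · simp
    · intro b _ hb; simp [hb]
    · intro h; exact absurd hδ h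

lemma dichotomy {α : V} (hα : α ∈ R.Φ) : R.IsPos α ∨ R.IsNeg α := by
  rcases R.pos_or_neg α hα with h | h
  · exact Or.inl ⟨hα, h⟩
  · exact Or.inr ⟨hα, h⟩

lemma neg_mem {α : V} (hα : α ∈ R.Φ) : -α ∈ R.Φ := by
  have h := R.reflect_mem α hα α hα
  have hne : ⟪α, α⟫ ≠ (0:ℝ) := by
    simp only [ne_eq, inner_self_eq_zero]
    exact R.ne_zero α hα
  have : 2 * ⟪α, α⟫ / ⟪α, α⟫ = (2:ℝ) := by field_simp
  rw [this] at h
  have : α - (2:ℝ) • α = -α := by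
    rw [two_smul]; abel
  rwa [this] at h

lemma isPos_neg {α : V} (h : R.IsNeg α) : R.IsPos (-α) := by
  obtain ⟨hΦ, c, hc, hα⟩ := h
  exact ⟨R.neg_mem hΦ, c, hc, by rw [hα]; simp⟩

lemma isNeg_neg {α : V} (h : R.IsPos α) : R.IsNeg (-α) := by
  obtain ⟨hΦ, c, hc, hα⟩ := h
  exact ⟨R.neg_mem hΦ, c, hc, by rw [hα]⟩

end RootSystemBase

namespace RootSystemBase

variable {V : Type*} [NormedAddCommGroup V] [InnerProductSpace ℝ V]

/-- The reflection in the root `δ`, as a linear map. -/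
noncomputable def reflMap (δ : V) : V →ₗ[ℝ] V where
  toFun x := x - (2 * ⟪x, δ⟫ / ⟪δ, δ⟫) • δ
  map_add' x y := by
    show x + y - (2 * ⟪x + y, δ⟫ / ⟪δ, δ⟫) • δ =
      (x - (2 * ⟪x, δ⟫ / ⟪δ, δ⟫) • δ) + (y - (2 * ⟪y, δ⟫ / ⟪δ, δ⟫) • δ)
    rw [inner_add_left]
    have h : 2 * (⟪x, δ⟫ + ⟪y, δ⟫) / ⟪δ, δ⟫
        = 2 * ⟪x, δ⟫ / ⟪δ, δ⟫ + 2 * ⟪y, δ⟫ / ⟪δ, δ⟫ := by ring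
    rw [h, add_smul]; abel
  map_smul' a x := by
    show a • x - (2 * ⟪a • x, δ⟫ / ⟪δ, δ⟫) • δ = a • (x - (2 * ⟪x, δ⟫ / ⟪δ, δ⟫) • δ)
    rw [real_inner_smul_left]
    have h : 2 * (a * ⟪x, δ⟫) / ⟪δ, δ⟫ = a * (2 * ⟪x, δ⟫ / ⟪δ, δ⟫) := by ring
    rw [h, ← smul_smul]
    simp [smul_sub]

lemma reflMap_apply (δ x : V) : reflMap δ x = x - (2 * ⟪x, δ⟫ / ⟪δ, δ⟫) • δ := rfl

lemma reflMap_invol (δ : V) (hδ : δ ≠ 0) (x : V) : reflMap δ (reflMap δ x) = x := by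
  have hd : ⟪δ, δ⟫ ≠ (0:ℝ) := by
    simp only [ne_eq, inner_self_eq_zero]; exact hδ
  have hinner : ⟪reflMap δ x, δ⟫ = -⟪x, δ⟫ := by
    rw [reflMap_apply, inner_sub_left, real_inner_smul_left]
    field_simp
    ring
  rw [reflMap_apply (x := reflMap δ x), hinner, reflMap_apply]
  have h : 2 * -⟪x, δ⟫ / ⟪δ, δ⟫ = -(2 * ⟪x, δ⟫ / ⟪δ, δ⟫) := by ring
  rw [h, neg_smul]
  abel

/-- The reflection in a nonzero root, as a linear equivalence. -/
noncomputable def refl (δ : V) (hδ : δ ≠ 0) : V ≃ₗ[ℝ] V :=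
  { reflMap δ with
    invFun := reflMap δ
    left_inv := reflMap_invol δ hδ
    right_inv := reflMap_invol δ hδ }

lemma refl_apply (δ : V) (hδ : δ ≠ 0) (x : V) :
    refl δ hδ x = x - (2 * ⟪x, δ⟫ / ⟪δ, δ⟫) • δ := rfl

lemma refl_invol (δ : V) (hδ : δ ≠ 0) (x : V) : refl δ hδ (refl δ hδ x) = x :=
  reflMap_invol δ hδ x

lemma refl_base (δ : V) (hδ : δ ≠ 0) : refl δ hδ δ = -δ := by
  have hd : ⟪δ, δ⟫ ≠ (0:ℝ) := by
    simp only [ne_eq, inner_self_eq_zero]; exact hδ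
  rw [refl_apply]
  have h : 2 * ⟪δ, δ⟫ / ⟪δ, δ⟫ = (2:ℝ) := by field_simp
  rw [h, two_smul]
  abel

variable (R : RootSystemBase V)

lemma refl_mem {δ x : V} (hδ : δ ∈ R.Φ) (hδ0 : δ ≠ 0) (hx : x ∈ R.Φ) :
    refl δ hδ0 x ∈ R.Φ := by
  rw [refl_apply]
  exact R.reflect_mem δ hδ x hx

end RootSystemBase

namespace RootSystemBase

variable {V : Type*} [NormedAddCommGroup V] [InnerProductSpace ℝ V] (R : RootSystemBase V)

open scoped Classical in
lemma sum_ite_single {δ : V} (hδ : δ ∈ R.Δ) (k : ℝ) :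
    ∑ d ∈ R.Δ, (if d = δ then k else 0) • d = k • δ := by
  rw [Finset.sum_eq_single δ]
  · simp
  · intro b _ hb; simp [hb]
  · intro h; exact absurd hδ h

lemma isPos_refl_of_ne {δ γ : V} (hδ : δ ∈ R.Δ) (hγ : R.IsPos γ) (hne : γ ≠ δ) :
    R.IsPos (γ - (2 * ⟪γ, δ⟫ / ⟪δ, δ⟫) • δ) := by
  classical
  have hδΦ := R.base_sub hδ
  set k := 2 * ⟪γ, δ⟫ / ⟪δ, δ⟫ with hk
  have hmem : γ - k • δ ∈ R.Φ := R.reflect_mem δ hδΦ γ hγ.1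
  rcases R.dichotomy hmem with h | h
  · exact h
  · exfalso
    obtain ⟨_, c', hc', hexp'⟩ := h
    obtain ⟨hγΦ, c, hc, hexp⟩ := hγ
    have hγ2 : ∑ d ∈ R.Δ, c d • d = ∑ d ∈ R.Δ, ((-c' d) + (if d = δ then k else 0)) • d := by
      simp only [add_smul, Finset.sum_add_distrib, neg_smul, Finset.sum_neg_distrib]
      rw [R.sum_ite_single hδ k, ← hexp]
      have : -∑ d ∈ R.Δ, c' d • d = γ - k • δ := by rw [← hexp']
      rw [this]
      abel
    have hcd := R.coeff_eq hγ2
    have hzero : ∀ d ∈ R.Δ, d ≠ δ → c d = 0 := by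
      intro d hd hdδ
      have h1 := hcd d hd
      rw [if_neg hdδ, add_zero] at h1
      have := hc d
      have := hc' d
      linarith
    have hγδ : γ = c δ • δ := by
      rw [hexp, Finset.sum_eq_single δ]
      · intro b hb hbδ; rw [hzero b hb hbδ, zero_smul]
      · intro h; exact absurd hδ h
    rcases R.reduced δ hδΦ (c δ) (by rw [← hγδ]; exact hγΦ) with h1 | h1
    · rw [h1, one_smul] at hγδ
      exact hne hγδ
    · rw [h1] at hγδ
      have hγneg : R.IsNeg γ := by
        rw [hγδ]
        have : ((-1 : ℝ)) • δ = -δ := by simp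
        rw [this]
        exact R.isNeg_neg (R.isPos_base hδ)
      exact R.not_pos_neg ⟨hγΦ, c, hc, hexp⟩ hγneg

end RootSystemBase

namespace RootSystemBase

variable {V : Type*} [NormedAddCommGroup V] [InnerProductSpace ℝ V] (R : RootSystemBase V)

/-- the (finite) set of inversions of `u`. -/
noncomputable def Ninv (u : V ≃ₗ[ℝ] V) : Finset V :=
  @Finset.filter V (fun γ => R.IsPos γ ∧ R.IsNeg (u γ)) (Classical.decPred _) R.Φ

lemma mem_Ninv {u : V ≃ₗ[ℝ] V} {γ : V} :
    γ ∈ R.Ninv u ↔ R.IsPos γ ∧ R.IsNeg (u γ) := by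
  unfold Ninv
  rw [@Finset.mem_filter V (fun γ => R.IsPos γ ∧ R.IsNeg (u γ)) (Classical.decPred _) R.Φ γ]
  constructor
  · rintro ⟨-, h⟩; exact h
  · rintro h; exact ⟨h.1.1, h⟩

lemma exists_base_neg (u : V ≃ₗ[ℝ] V) (hu : ∀ α ∈ R.Φ, u α ∈ R.Φ)
    {α : V} (hα : R.IsPos α) (hneg : R.IsNeg (u α)) :
    ∃ δ ∈ R.Δ, R.IsNeg (u δ) := by
  by_contra hcon
  push_neg at hcon
  have hpos : ∀ δ ∈ R.Δ, R.IsPos (u δ) := fun δ hδ =>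
    (R.dichotomy (hu δ (R.base_sub hδ))).resolve_right (hcon δ hδ)
  have H : ∀ d : V, ∃ e : V → ℝ, (∀ x, 0 ≤ e x) ∧ (d ∈ R.Δ → u d = ∑ x ∈ R.Δ, e x • x) := by
    intro d
    by_cases hd : d ∈ R.Δ
    · obtain ⟨-, e, he, hexp⟩ := hpos d hd
      exact ⟨e, he, fun _ => hexp⟩
    · exact ⟨fun _ => 0, fun _ => le_refl 0, fun h => absurd h hd⟩
  choose e he1 he2 using H
  obtain ⟨hαΦ, c, hc, hexp⟩ := hα
  have hua : u α = ∑ x ∈ R.Δ, (∑ d ∈ R.Δ, c d * e d x) • x := by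
    rw [hexp, map_sum]
    calc ∑ d ∈ R.Δ, u (c d • d)
        = ∑ d ∈ R.Δ, ∑ x ∈ R.Δ, (c d * e d x) • x := by
          apply Finset.sum_congr rfl
          intro d hd
          rw [map_smul, he2 d hd, Finset.smul_sum]
          apply Finset.sum_congr rfl
          intro x _
          rw [smul_smul]
      _ = ∑ x ∈ R.Δ, (∑ d ∈ R.Δ, c d * e d x) • x := by
          rw [Finset.sum_comm]
          apply Finset.sum_congr rfl
          intro x _
          rw [Finset.sum_smul]
  have hupos : R.IsPos (u α) :=
    ⟨hneg.1, fun x => ∑ d ∈ R.Δ, c d * e d x,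
      fun x => Finset.sum_nonneg (fun d _ => mul_nonneg (hc d) (he1 d x)), hua⟩
  exact R.not_pos_neg hupos hneg

open scoped Classical in
lemma prec_base {β δ : V} (hβ : β ∈ R.Δ) (hδ : δ ∈ R.Δ) (h : R.Prec β δ) : β = δ := by
  obtain ⟨c, hc, hexp, hpos⟩ := h
  have hind : ∑ d ∈ R.Δ, c d • d = ∑ d ∈ R.Δ, (if d = δ then (1:ℝ) else 0) • d := by
    rw [R.sum_ite_single hδ 1, one_smul, ← hexp]
  have hcβ := R.coeff_eq hind β hβ
  by_contra hne
  rw [if_neg hne] at hcβ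
  rw [hcβ] at hpos
  exact lt_irrefl 0 hpos

end RootSystemBase

namespace RootSystemBase

variable {V : Type*} [NormedAddCommGroup V] [InnerProductSpace ℝ V] (R : RootSystemBase V)

lemma key : ∀ (n : ℕ) (u : V ≃ₗ[ℝ] V), (∀ α ∈ R.Φ, u α ∈ R.Φ) →
    (R.Ninv u).card ≤ n → ∀ β ∈ R.Δ,
    (∃ α : V, R.IsPos α ∧ R.IsNeg (u α) ∧ R.Prec β α) →
    β ∈ Submodule.span ℝ {α : V | R.IsPos α ∧ R.IsNeg (u α)} := by
  intro n
  induction n with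
  | zero =>
    rintro u hu hcard β hβ ⟨α, h1, h2, -⟩
    exfalso
    have hmem : α ∈ R.Ninv u := R.mem_Ninv.mpr ⟨h1, h2⟩
    have := Finset.card_pos.mpr ⟨α, hmem⟩
    omega
  | succ n ih =>
    classical
    rintro u hu hcard β hβ ⟨α, h1, h2, h3⟩
    obtain ⟨δ, hδ, hδneg⟩ := R.exists_base_neg u hu h1 h2
    have hδ0 : δ ≠ (0:V) := R.ne_zero δ (R.base_sub hδ)
    set s : V ≃ₗ[ℝ] V := refl δ hδ0 with hs
    set u' : V ≃ₗ[ℝ] V := s.trans u with hu'def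
    have hu'app : ∀ x, u' x = u (s x) := fun x => rfl
    have hδspan : δ ∈ Submodule.span ℝ {α : V | R.IsPos α ∧ R.IsNeg (u α)} :=
      Submodule.subset_span ⟨R.isPos_base hδ, hδneg⟩
    by_cases hbd : β = δ
    · rwa [hbd]
    -- facts about elements of N(u')
    have fwd : ∀ γ : V, R.IsPos γ → R.IsNeg (u' γ) →
        γ ≠ δ ∧ R.IsPos (s γ) ∧ R.IsNeg (u (s γ)) ∧ s γ ≠ δ := by
      intro γ hγp hγn
      have hγδ : γ ≠ δ := by
        intro hcon
        have hthis := hγn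
        rw [hu'app, hcon, hs, refl_base δ hδ0, map_neg] at hthis
        exact R.not_pos_neg (R.isPos_neg hδneg) hthis
      have hsγ : R.IsPos (s γ) := by
        rw [hs, refl_apply]
        exact R.isPos_refl_of_ne hδ hγp hγδ
      refine ⟨hγδ, hsγ, ?_, ?_⟩
      · rw [← hu'app]; exact hγn
      · intro hcon
        have : γ = -δ := by
          have := congrArg s hcon
          rw [hs, refl_invol, refl_base] at this
          exact this
        rw [this] at hγp
        exact R.not_pos_neg hγp (R.isNeg_neg (R.isPos_base hδ))
    -- u' preserves Φ
    have hu' : ∀ x ∈ R.Φ, u' x ∈ R.Φ := by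
      intro x hx
      rw [hu'app]
      exact hu _ (R.refl_mem (R.base_sub hδ) hδ0 hx)
    -- cardinality decreases
    have hcard' : (R.Ninv u').card ≤ n := by
      have hinj : Set.InjOn s (R.Ninv u') := by
        intro x _ y _ hxy
        have := congrArg s hxy
        rwa [hs, refl_invol, refl_invol] at this
      have hmaps : ∀ γ ∈ R.Ninv u', s γ ∈ (R.Ninv u).erase δ := by
        intro γ hγ
        rw [R.mem_Ninv] at hγ
        obtain ⟨-, hp, hn, hne⟩ := fwd γ hγ.1 hγ.2
        rw [Finset.mem_erase, R.mem_Ninv]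
        exact ⟨hne, hp, hn⟩
      have hle := Finset.card_le_card_of_injOn s hmaps hinj
      have hδN : δ ∈ R.Ninv u := R.mem_Ninv.mpr ⟨R.isPos_base hδ, hδneg⟩
      rw [Finset.card_erase_of_mem hδN] at hle
      omega
    -- α is not δ
    have hαδ : α ≠ δ := by
      rintro rfl
      exact hbd (R.prec_base hβ hδ h3)
    -- the new witness s α
    have hsαpos : R.IsPos (s α) := by
      rw [hs, refl_apply]
      exact R.isPos_refl_of_ne hδ h1 hαδ
    have hsαneg : R.IsNeg (u' (s α)) := by
      rw [hu'app, hs, refl_invol]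
      exact h2
    have hsαprec : R.Prec β (s α) := by
      obtain ⟨c, hc, hexp, hcβ⟩ := h3
      obtain ⟨-, c', hc', hexp'⟩ := hsαpos
      have heq : ∑ d ∈ R.Δ, c d • d =
          ∑ d ∈ R.Δ, (c' d + (if d = δ then 2 * ⟪α, δ⟫ / ⟪δ, δ⟫ else 0)) • d := by
        classical
        simp only [add_smul, Finset.sum_add_distrib]
        rw [R.sum_ite_single hδ, ← hexp, ← hexp', hs, refl_apply]
        abel
      have hcβ' := R.coeff_eq heq β hβ
      rw [if_neg hbd, add_zero] at hcβ'
      exact ⟨c', hc', hexp', by rw [← hcβ']; exact hcβ⟩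
    have hIH := ih u' hu' hcard' β hβ ⟨s α, hsαpos, hsαneg, hsαprec⟩
    -- span of N(u') sits inside span of N(u)
    have hle : Submodule.span ℝ {γ : V | R.IsPos γ ∧ R.IsNeg (u' γ)} ≤
        Submodule.span ℝ {γ : V | R.IsPos γ ∧ R.IsNeg (u γ)} := by
      rw [Submodule.span_le]
      rintro γ ⟨hγp, hγn⟩
      obtain ⟨-, hp, hn, -⟩ := fwd γ hγp hγn
      have hsγ : s γ ∈ Submodule.span ℝ {γ : V | R.IsPos γ ∧ R.IsNeg (u γ)} :=
        Submodule.subset_span ⟨hp, hn⟩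
      have hγeq : γ = s γ + (2 * ⟪γ, δ⟫ / ⟪δ, δ⟫) • δ := by
        rw [hs, refl_apply]; abel
      have : γ ∈ Submodule.span ℝ {γ : V | R.IsPos γ ∧ R.IsNeg (u γ)} := by
        rw [hγeq]
        exact Submodule.add_mem _ hsγ (Submodule.smul_mem _ _ hδspan)
      exact this
    exact hle hIH

end RootSystemBase

/-- Let `w` be an element of the Weyl group which is *regular*, i.e. for every simple
root `β` there is a positive root `α` with `w⁻¹α < 0` in whose simple-root expansion
`β` occurs with positive coefficient. Then the positive roots `α` with `w⁻¹α < 0`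
span `V`. -/
theorem regular_span_top {V : Type*} [NormedAddCommGroup V]
    [InnerProductSpace ℝ V] (R : RootSystemBase V) (w : V ≃ₗ[ℝ] V)
    (hw : ∀ α ∈ R.Φ, w α ∈ R.Φ ∧ w.symm α ∈ R.Φ)
    (hspan : Submodule.span ℝ (R.Δ : Set V) = ⊤)
    (hreg : ∀ β ∈ R.Δ, ∃ α : V, R.IsPos α ∧ R.IsNeg (w.symm α) ∧ R.Prec β α) :
    Submodule.span ℝ {α : V | R.IsPos α ∧ R.IsNeg (w.symm α)} = ⊤ := by
  rw [← top_le_iff, ← hspan, Submodule.span_le]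
  intro β hβ
  have hβ' : β ∈ R.Δ := hβ
  exact R.key (R.Ninv w.symm).card w.symm (fun α hα => (hw α hα).2) le_rfl β hβ' (hreg β hβ')
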